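/- Let d ≥ 1, p ∈ (1,∞), q = p/(p−1), and let φ, f₀ ∈ L^p ∩ P. Then for every g ∈ co(P_{φ,ν}) and every ν > 0, ‖g − φ_ν * f₀‖_p ≤ 2 ν^{d/q} ‖φ‖_p, where φ_ν * f₀ denotes the convolution (φ_ν * f₀)(x) = ∫_{ℝ^d} φ_ν(x − y) f₀(y) dy. -/

import Mathlib

open MeasureTheory ENNReal

noncomputable section

/-- `ℝ^d` with the Euclidean norm and Lebesgue measure. -/
abbrev Euc (d : ℕ) := EuclideanSpace ℝ (Fin d)

/-- A probability density function on `ℝ^d`. -/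
def IsPDF {d : ℕ} (f : Euc d → ℝ) : Prop :=
  Measurable f ∧ (∀ x, 0 ≤ f x) ∧ ∫⁻ x, ENNReal.ofReal (f x) = 1

/-- The dilation `φ_ν(x) = ν^d φ(ν x)`. -/
def dilate {d : ℕ} (φ : Euc d → ℝ) (ν : ℝ) : Euc d → ℝ :=
  fun x => ν ^ d * φ (ν • x)

/-- The location–scale class `P_φ`. -/
def locScaleClass {d : ℕ} (φ : Euc d → ℝ) : Set (Euc d → ℝ) :=
  {g | ∃ μ : Euc d, ∃ ν : ℝ, 0 < ν ∧ g = fun x => dilate φ ν (x - μ)}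

/-- The fixed-scale location class `P_{φ,ν}`. -/
def locClass {d : ℕ} (φ : Euc d → ℝ) (ν : ℝ) : Set (Euc d → ℝ) :=
  {g | ∃ μ : Euc d, g = fun x => dilate φ ν (x - μ)}

/-- `co_m(Q)`: convex combinations of `m` elements of `Q`. -/
def mixComb {d : ℕ} (Q : Set (Euc d → ℝ)) (m : ℕ) : Set (Euc d → ℝ) :=
  {f | ∃ (w : Fin m → ℝ) (g : Fin m → Euc d → ℝ),
    (∀ j, 0 ≤ w j) ∧ (∑ j, w j) = 1 ∧ (∀ j, g j ∈ Q) ∧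
    f = fun x => ∑ j, w j * g j x}

/-- `co(Q) = ⋃_m co_m(Q)`: all finite convex combinations of elements of `Q`. -/
def mix {d : ℕ} (Q : Set (Euc d → ℝ)) : Set (Euc d → ℝ) := ⋃ m, mixComb Q m

section aux
variable {d : ℕ}
lemma lint_comp_smul (h : Euc d → ℝ≥0∞) (hm : Measurable h) {ν : ℝ} (hν : 0 < ν) :
    ∫⁻ x, h (ν • x) = ENNReal.ofReal ((ν ^ d)⁻¹) * ∫⁻ x, h x := by
  calc ∫⁻ x, h (ν • x)
      = ∫⁻ y, h y ∂(Measure.map (ν • ·) volume) :=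
        (lintegral_map hm (measurable_id.const_smul ν)).symm
    _ = ENNReal.ofReal ((ν ^ d)⁻¹) * ∫⁻ x, h x := by
        rw [MeasureTheory.Measure.map_addHaar_smul volume hν.ne', lintegral_smul_measure, smul_eq_mul,
          finrank_euclideanSpace_fin, abs_of_nonneg (by positivity)]

lemma lint_dilate (p : ℝ) (hp : 0 < p) {φ : Euc d → ℝ} (hφ : Measurable φ)
    {ν : ℝ} (hν : 0 < ν) (μ0 : Euc d) :
    ∫⁻ x, ENNReal.ofReal (dilate φ ν (x - μ0)) ^ p
      = ENNReal.ofReal (ν ^ ((d : ℝ) * p - d)) * ∫⁻ x, ENNReal.ofReal (φ x) ^ p := by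
  set G : Euc d → ℝ≥0∞ := fun z => ENNReal.ofReal (φ z) ^ p with hG
  have hGm : Measurable G := (ENNReal.measurable_ofReal.comp hφ).pow_const p
  have hpt : ∀ x : Euc d, ENNReal.ofReal (dilate φ ν (x - μ0)) ^ p
      = ENNReal.ofReal (ν ^ d) ^ p * G (ν • x - ν • μ0) := by
    intro x
    rw [hG]
    simp only [dilate, smul_sub]
    rw [ENNReal.ofReal_mul (by positivity), ENNReal.mul_rpow_of_nonneg _ _ hp.le]
  simp_rw [hpt]
  rw [lintegral_const_mul' _ _ (by exact (ENNReal.rpow_lt_top_of_nonneg hp.le ENNReal.ofReal_ne_top).ne)]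
  have hH : ∫⁻ x, G (ν • x - ν • μ0) = ENNReal.ofReal ((ν ^ d)⁻¹) * ∫⁻ z, G z := by
    have := lint_comp_smul (fun z => G (z - ν • μ0)) (hGm.comp (measurable_sub_const _)) hν
    simpa [lintegral_sub_right_eq_self (fun z => G z) (ν • μ0)] using this
  rw [hH, ← mul_assoc]
  congr 1
  rw [ENNReal.ofReal_rpow_of_pos (by positivity), ← ENNReal.ofReal_mul (by positivity)]
  congr 1
  rw [← Real.rpow_natCast ν d, ← Real.rpow_mul hν.le, ← Real.rpow_neg_one (ν ^ (d:ℝ)),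
    ← Real.rpow_mul hν.le, ← Real.rpow_add hν]
  ring_nf

lemma eLpNorm_eq_I {p : ℝ} (hp : 0 < p) {f : Euc d → ℝ} (hf : ∀ x, 0 ≤ f x) :
    eLpNorm f (ENNReal.ofReal p) volume = (∫⁻ x, ENNReal.ofReal (f x) ^ p) ^ (1 / p) := by
  rw [eLpNorm_eq_lintegral_rpow_enorm_toReal (by simpa using hp) ENNReal.ofReal_ne_top,
    ENNReal.toReal_ofReal hp.le]
  congr 1
  refine lintegral_congr fun x => ?_
  rw [Real.enorm_eq_ofReal (hf x)]

lemma eLpNorm_dilate_sub {p : ℝ} (hp : 0 < p) {φ : Euc d → ℝ} (hφm : Measurable φ)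
    (hφ0 : ∀ x, 0 ≤ φ x) {ν : ℝ} (hν : 0 < ν) (μ0 : Euc d) :
    eLpNorm (fun x => dilate φ ν (x - μ0)) (ENNReal.ofReal p) volume
      = ENNReal.ofReal (ν ^ (((d : ℝ) * p - d) / p)) * eLpNorm φ (ENNReal.ofReal p) volume := by
  have h1 : ∀ x : Euc d, 0 ≤ dilate φ ν (x - μ0) :=
    fun x => mul_nonneg (pow_nonneg hν.le d) (hφ0 _)
  rw [eLpNorm_eq_I hp h1,
    eLpNorm_eq_I hp hφ0, lint_dilate p hp hφm hν μ0,
    ENNReal.mul_rpow_of_nonneg _ _ (by positivity),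
    ENNReal.ofReal_rpow_of_pos (Real.rpow_pos_of_pos hν _),
    ← Real.rpow_mul hν.le, mul_one_div]

lemma measurable_dilate {φ : Euc d → ℝ} (hφ : Measurable φ) (ν : ℝ) :
    Measurable (dilate φ ν) :=
  measurable_const.mul (hφ.comp (measurable_id.const_smul ν))

lemma dilate_nonneg {φ : Euc d → ℝ} (hφ : ∀ x, 0 ≤ φ x) {ν : ℝ} (hν : 0 < ν) (x : Euc d) :
    0 ≤ dilate φ ν x :=
  mul_nonneg (pow_nonneg hν.le d) (hφ _)

lemma conv_bound {p : ℝ} (hp1 : 1 < p) {φ f₀ : Euc d → ℝ} (hφm : Measurable φ)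
    (hφ0 : ∀ x, 0 ≤ φ x) (hf₀m : Measurable f₀) (hf₀0 : ∀ x, 0 ≤ f₀ x)
    (hf₀1 : ∫⁻ y, ENNReal.ofReal (f₀ y) = 1) {ν : ℝ} (hν : 0 < ν) :
    eLpNorm (fun x => ∫ y, dilate φ ν (x - y) * f₀ y) (ENNReal.ofReal p) volume
      ≤ ENNReal.ofReal (ν ^ (((d : ℝ) * p - d) / p)) * eLpNorm φ (ENNReal.ofReal p) volume := by
  have hp : 0 < p := zero_lt_one.trans hp1
  have hp0 : p ≠ 0 := hp.ne'
  set q' := p / (p - 1) with hq'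
  have hpq : p.HolderConjugate q' := Real.HolderConjugate.conjExponent hp1
  set Φ : Euc d → ℝ≥0∞ := fun z => ENNReal.ofReal (dilate φ ν z) with hΦ
  set w : Euc d → ℝ≥0∞ := fun y => ENNReal.ofReal (f₀ y) with hw
  have hΦm : Measurable Φ := ENNReal.measurable_ofReal.comp (measurable_dilate hφm ν)
  have hwm : Measurable w := ENNReal.measurable_ofReal.comp hf₀m
  have hw1 : ∫⁻ y, w y = 1 := hf₀1
  have step1 : ∀ x : Euc d, (‖∫ y, dilate φ ν (x - y) * f₀ y‖₊ : ℝ≥0∞)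
      ≤ ∫⁻ y, Φ (x - y) * w y := by
    intro x
    refine (enorm_integral_le_lintegral_enorm _).trans_eq ?_
    refine lintegral_congr fun y => ?_
    rw [Real.enorm_eq_ofReal (mul_nonneg (dilate_nonneg hφ0 hν _) (hf₀0 y)),
      ENNReal.ofReal_mul (dilate_nonneg hφ0 hν _)]
  have step2 : ∀ x : Euc d, (∫⁻ y, Φ (x - y) * w y)
      ≤ (∫⁻ y, Φ (x - y) ^ p * w y) ^ (1 / p) := by
    intro x
    have hmf : AEMeasurable (fun y : Euc d => Φ (x - y) * w y ^ (1/p)) volume :=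
      ((hΦm.comp (measurable_const.sub measurable_id)).mul (hwm.pow_const _)).aemeasurable
    have hmg : AEMeasurable (fun y : Euc d => w y ^ (1/q')) volume :=
      (hwm.pow_const _).aemeasurable
    have key := ENNReal.lintegral_mul_le_Lp_mul_Lq volume hpq hmf hmg
    have lhs_eq : ∀ y : Euc d,
        ((fun y : Euc d => Φ (x - y) * w y ^ (1/p)) * fun y => w y ^ (1/q')) y
          = Φ (x - y) * w y := by
      intro y
      simp only [Pi.mul_apply]
      rw [mul_assoc, ← ENNReal.rpow_add_of_nonneg _ _ (one_div_nonneg.mpr hp.le) (one_div_nonneg.mpr hpq.symm.pos.le),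
        one_div, one_div, hpq.inv_add_inv_eq_one, ENNReal.rpow_one]
    have f_eq : ∀ y : Euc d, (Φ (x - y) * w y ^ (1/p)) ^ p = Φ (x - y) ^ p * w y := by
      intro y
      rw [ENNReal.mul_rpow_of_nonneg _ _ hp.le, ← ENNReal.rpow_mul, one_div,
        inv_mul_cancel₀ hp0, ENNReal.rpow_one]
    have g_eq : ∀ y : Euc d, (w y ^ (1/q')) ^ q' = w y := by
      intro y
      rw [← ENNReal.rpow_mul, one_div, inv_mul_cancel₀ hpq.symm.pos.ne', ENNReal.rpow_one]
    calc ∫⁻ y, Φ (x - y) * w y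
        = ∫⁻ y, ((fun y : Euc d => Φ (x - y) * w y ^ (1/p)) * fun y => w y ^ (1/q')) y :=
          lintegral_congr fun y => (lhs_eq y).symm
      _ ≤ (∫⁻ y, (Φ (x - y) * w y ^ (1/p)) ^ p) ^ (1/p)
            * (∫⁻ y, (w y ^ (1/q')) ^ q') ^ (1/q') := key
      _ = (∫⁻ y, Φ (x - y) ^ p * w y) ^ (1/p) * (∫⁻ y, w y) ^ (1/q') := by
          rw [lintegral_congr f_eq, lintegral_congr g_eq]
      _ = (∫⁻ y, Φ (x - y) ^ p * w y) ^ (1/p) := by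
          rw [hw1, ENNReal.one_rpow, mul_one]
  have mono : ∀ x : Euc d, (‖∫ y, dilate φ ν (x - y) * f₀ y‖₊ : ℝ≥0∞) ^ p
      ≤ ∫⁻ y, Φ (x - y) ^ p * w y := by
    intro x
    calc (‖∫ y, dilate φ ν (x - y) * f₀ y‖₊ : ℝ≥0∞) ^ p
        ≤ ((∫⁻ y, Φ (x - y) ^ p * w y) ^ (1/p)) ^ p :=
          ENNReal.rpow_le_rpow ((step1 x).trans (step2 x)) hp.le
      _ = ∫⁻ y, Φ (x - y) ^ p * w y := by
          rw [← ENNReal.rpow_mul, one_div, inv_mul_cancel₀ hp0, ENNReal.rpow_one]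
  have hker : Measurable fun z : Euc d × Euc d => Φ (z.1 - z.2) ^ p * w z.2 :=
    ((hΦm.comp (measurable_fst.sub measurable_snd)).pow_const p).mul (hwm.comp measurable_snd)
  have swap : ∫⁻ x, ∫⁻ y, Φ (x - y) ^ p * w y = ∫⁻ y, ∫⁻ x, Φ (x - y) ^ p * w y :=
    lintegral_lintegral_swap hker.aemeasurable
  set K : ℝ≥0∞ := ENNReal.ofReal (ν ^ ((d : ℝ) * p - d)) * ∫⁻ z, ENNReal.ofReal (φ z) ^ p with hK
  have inner : ∫⁻ y, ∫⁻ x, Φ (x - y) ^ p * w y = K := by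
    have : ∀ y : Euc d, ∫⁻ x, Φ (x - y) ^ p * w y = K * w y := by
      intro y
      rw [lintegral_mul_const' (w y) _ ENNReal.ofReal_ne_top]
      congr 1
      exact lint_dilate p hp hφm hν y
    rw [lintegral_congr this, lintegral_const_mul K hwm, hw1, mul_one]
  rw [eLpNorm_eq_lintegral_rpow_enorm_toReal (by simpa using hp) ENNReal.ofReal_ne_top,
    ENNReal.toReal_ofReal hp.le]
  calc (∫⁻ x, (‖∫ y, dilate φ ν (x - y) * f₀ y‖₊ : ℝ≥0∞) ^ p) ^ (1/p)
      ≤ (∫⁻ x, ∫⁻ y, Φ (x - y) ^ p * w y) ^ (1/p) :=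
        ENNReal.rpow_le_rpow (lintegral_mono mono) (one_div_nonneg.mpr hp.le)
    _ = K ^ (1/p) := by rw [swap, inner]
    _ = ENNReal.ofReal (ν ^ (((d : ℝ) * p - d) / p)) * eLpNorm φ (ENNReal.ofReal p) volume := by
        rw [hK, ENNReal.mul_rpow_of_nonneg _ _ (by positivity),
          ENNReal.ofReal_rpow_of_pos (Real.rpow_pos_of_pos hν _),
          ← Real.rpow_mul hν.le, mul_one_div, ← eLpNorm_eq_I hp hφ0]

end aux

/-- Uniform bound on the distance between a finite mixture from `co(P_{φ,ν})` and
the convolution `φ_ν * f₀`: `‖g - φ_ν * f₀‖_p ≤ 2 ν^{d/q} ‖φ‖_p`. -/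
theorem mixture_convolution_dist_le
    (d : ℕ) (hd : 1 ≤ d) (p q : ℝ) (hp1 : 1 < p) (hq : q = p / (p - 1))
    (φ f₀ : Euc d → ℝ) (hφ : IsPDF φ) (hφp : MemLp φ (ENNReal.ofReal p) volume)
    (hf₀ : IsPDF f₀) (hf₀p : MemLp f₀ (ENNReal.ofReal p) volume) :
    ∀ ν : ℝ, 0 < ν → ∀ g ∈ mix (locClass φ ν),
      eLpNorm (fun x => g x - ∫ y, dilate φ ν (x - y) * f₀ y)
          (ENNReal.ofReal p) volume
        ≤ ENNReal.ofReal (2 * ν ^ ((d : ℝ) / q)) * eLpNorm φ (ENNReal.ofReal p) volume := by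
  obtain ⟨hφm, hφ0, hφ1⟩ := hφ
  obtain ⟨hf₀m, hf₀0, hf₀1⟩ := hf₀
  intro ν hν g hg
  have hp : 0 < p := zero_lt_one.trans hp1
  have hP1 : 1 ≤ ENNReal.ofReal p := by
    rw [← ENNReal.ofReal_one]; exact ENNReal.ofReal_le_ofReal hp1.le
  set C := ENNReal.ofReal (ν ^ (((d : ℝ) * p - d) / p)) * eLpNorm φ (ENNReal.ofReal p) volume
    with hC
  simp only [mix, Set.mem_iUnion, mixComb, Set.mem_setOf_eq] at hg
  obtain ⟨m, w, gf, hw0, hwsum, hmem, hgeq⟩ := hg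
  simp only [locClass, Set.mem_setOf_eq] at hmem
  choose μs hμs using hmem
  have hconv_m : AEStronglyMeasurable (fun x => ∫ y, dilate φ ν (x - y) * f₀ y) volume := by
    have hk : StronglyMeasurable fun z : Euc d × Euc d => dilate φ ν (z.1 - z.2) * f₀ z.2 :=
      (((measurable_dilate hφm ν).comp (measurable_fst.sub measurable_snd)).mul
        (hf₀m.comp measurable_snd)).stronglyMeasurable
    exact hk.integral_prod_right'.aestronglyMeasurable
  have hgfm : ∀ j, Measurable (gf j) := fun j => by
    rw [hμs j]; exact (measurable_dilate hφm ν).comp (measurable_sub_const _)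
  have hgm : AEStronglyMeasurable (fun x => ∑ j, w j * gf j x) volume :=
    (Finset.measurable_sum _ fun j _ => measurable_const.mul (hgfm j)).aestronglyMeasurable
  have hgfC : ∀ j, eLpNorm (gf j) (ENNReal.ofReal p) volume = C := fun j => by
    rw [hμs j]; exact eLpNorm_dilate_sub hp hφm hφ0 hν (μs j)
  have hsum_fun : (fun x => ∑ j, w j * gf j x) = ∑ j : Fin m, w j • gf j := by
    ext x; simp [Finset.sum_apply]
  have hmix : eLpNorm (fun x => ∑ j, w j * gf j x) (ENNReal.ofReal p) volume ≤ C := by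
    rw [hsum_fun]
    refine le_trans (eLpNorm_sum_le
      (fun j _ => ((hgfm j).const_smul (w j)).aestronglyMeasurable) hP1) ?_
    have hterm : ∀ j : Fin m, eLpNorm (w j • gf j) (ENNReal.ofReal p) volume
        = ENNReal.ofReal (w j) * C := by
      intro j
      rw [eLpNorm_const_smul, hgfC j, ← Real.enorm_eq_ofReal (hw0 j)]
    calc ∑ j : Fin m, eLpNorm (w j • gf j) (ENNReal.ofReal p) volume
        = ∑ j : Fin m, ENNReal.ofReal (w j) * C := Finset.sum_congr rfl fun j _ => hterm j
      _ = (∑ j : Fin m, ENNReal.ofReal (w j)) * C := (Finset.sum_mul _ _ _).symm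
      _ = ENNReal.ofReal (∑ j : Fin m, w j) * C := by
          rw [ENNReal.ofReal_sum_of_nonneg fun j _ => hw0 j]
      _ = C := by rw [hwsum, ENNReal.ofReal_one, one_mul]
      _ ≤ C := le_rfl
  have hconv : eLpNorm (fun x => ∫ y, dilate φ ν (x - y) * f₀ y) (ENNReal.ofReal p) volume ≤ C :=
    conv_bound hp1 hφm hφ0 hf₀m hf₀0 hf₀1 hν
  have hexp : ((d : ℝ) * p - d) / p = (d : ℝ) / q := by
    rw [hq]
    have hp1' : p - 1 ≠ 0 := sub_ne_zero.mpr hp1.ne'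
    field_simp
  have hmain : eLpNorm (fun x => g x - ∫ y, dilate φ ν (x - y) * f₀ y)
      (ENNReal.ofReal p) volume ≤ C + C := by
    have hfun : (fun x => g x - ∫ y, dilate φ ν (x - y) * f₀ y)
        = (fun x => ∑ j, w j * gf j x) - (fun x => ∫ y, dilate φ ν (x - y) * f₀ y) := by
      funext x; rw [hgeq]; rfl
    rw [hfun]
    exact (eLpNorm_sub_le hgm hconv_m hP1).trans (add_le_add hmix hconv)
  refine hmain.trans (le_of_eq ?_)
  rw [← hexp, hC, ENNReal.ofReal_mul (by norm_num : (0:ℝ) ≤ 2)]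
  rw [show (ENNReal.ofReal 2 : ℝ≥0∞) = 2 from by norm_num]
  ring
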